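/- arXiv:math/0510417 — 3 statements merged into one kernel-verified Lean document; each statement's English description precedes it below -/
import Mathlib

section
/- Let x₋ < x₊ be real numbers with x₊·x₋ < (x₊ + x₋) − 1 and x₊ + x₋ ≥ 1, and let (aₙ)ₙ≥₀ satisfy aₙ₊₁ = (x₊ + x₋)·aₙ − x₊·x₋·aₙ₋₁ for all n ≥ 1, with initial terms satisfying 0 < a₀ ≤ a₁. Then the sequence (aₙ) is strictly increasing from index 1 on: aₙ₊₁ > aₙ for all n ≥ 1. -/
theorem stmt_3 (xm xp : ℝ) (hlt : xm < xp)
    (h1 : xp * xm < (xp + xm) - 1) (h2 : xp + xm ≥ 1)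
    (aseq : ℕ → ℝ)
    (hrec : ∀ n : ℕ, aseq (n + 2) = (xp + xm) * aseq (n + 1) - xp * xm * aseq n)
    (h0 : 0 < aseq 0) (h01 : aseq 0 ≤ aseq 1) :
    ∀ n : ℕ, 1 ≤ n → aseq n < aseq (n + 1) := by
  have key : ∀ n : ℕ, 0 < aseq n ∧ aseq n ≤ aseq (n + 1) := by
    intro n
    induction n with
    | zero => exact ⟨h0, h01⟩
    | succ m ih =>
      obtain ⟨hpos, hmono⟩ := ih
      have hpos' : 0 < aseq (m + 1) := lt_of_lt_of_le hpos hmono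
      refine ⟨hpos', ?_⟩
      have := hrec m
      nlinarith [this, hpos, hmono, h1, h2]
  intro n hn
  obtain ⟨m, rfl⟩ := Nat.exists_eq_add_of_le hn
  obtain ⟨hpos, hmono⟩ := key m
  have := hrec m
  have h1m : (1 : ℕ) + m = m + 1 := by omega
  rw [h1m]
  nlinarith [this, hpos, hmono, h1, h2]
end

section
/- Let (aₖ) be the sequence defined by a₀ = 1, a₁ = 5, aₖ₊₁ = 6aₖ − aₖ₋₁, and let (dₖ) be the sequence defined by d₀ = 1, d₁ = 7, dₖ₊₁ = 6dₖ − dₖ₋₁. Then for all k ≥ 0, 2·aₖ² − 1 = dₖ². -/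
theorem stmt_9 (a d : ℕ → ℤ)
    (ha0 : a 0 = 1) (ha1 : a 1 = 5)
    (harec : ∀ k : ℕ, a (k + 2) = 6 * a (k + 1) - a k)
    (hd0 : d 0 = 1) (hd1 : d 1 = 7)
    (hdrec : ∀ k : ℕ, d (k + 2) = 6 * d (k + 1) - d k) :
    ∀ k : ℕ, 2 * (a k) ^ 2 - 1 = (d k) ^ 2 := by
  have key : ∀ k : ℕ, 2 * (a k) ^ 2 - 1 = (d k) ^ 2 ∧
      2 * a k * a (k + 1) - 3 = d k * d (k + 1) ∧
      2 * (a (k + 1)) ^ 2 - 1 = (d (k + 1)) ^ 2 := by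
    intro k
    induction k with
    | zero => rw [ha0, ha1, hd0, hd1]; norm_num
    | succ n ih =>
      obtain ⟨h1, h2, h3⟩ := ih
      refine ⟨h3, ?_, ?_⟩
      · rw [harec n, hdrec n]; nlinarith [h1, h2, h3]
      · rw [harec n, hdrec n]; nlinarith [h1, h2, h3]
  exact fun k => (key k).1
end

section
/- Let (aₖ) be defined by a₀ = 1, a₁ = 5, aₖ₊₁ = 6aₖ − aₖ₋₁, let (dₖ) be defined by d₀ = 1, d₁ = 7, dₖ₊₁ = 6dₖ − dₖ₋₁, and set mₖ = (dₖ − 1)/2 (a natural number since dₖ is odd). Then for all k ≥ 0, aₖ² = mₖ² + (mₖ + 1)². In other words, (mₖ, mₖ + 1, aₖ) is a Pythagorean triple whose legs differ by one. -/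
theorem stmt_11 (a d m : ℕ → ℤ)
    (ha0 : a 0 = 1) (ha1 : a 1 = 5)
    (harec : ∀ k : ℕ, a (k + 2) = 6 * a (k + 1) - a k)
    (hd0 : d 0 = 1) (hd1 : d 1 = 7)
    (hdrec : ∀ k : ℕ, d (k + 2) = 6 * d (k + 1) - d k)
    (hm : ∀ k : ℕ, 2 * m k = d k - 1) :
    ∀ k : ℕ, (a k) ^ 2 = (m k) ^ 2 + (m k + 1) ^ 2 := by
  have key : ∀ k : ℕ, (2 * (a k) ^ 2 - (d k) ^ 2 = 1 ∧
      2 * (a (k+1)) ^ 2 - (d (k+1)) ^ 2 = 1) ∧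
      2 * a k * a (k + 1) - d k * d (k + 1) = 3 := by
    intro k
    induction k with
    | zero => rw [ha0, ha1, hd0, hd1]; norm_num
    | succ n ih =>
      obtain ⟨⟨h1, h1'⟩, h2⟩ := ih
      have ha := harec n
      have hd := hdrec n
      refine ⟨⟨h1', ?_⟩, ?_⟩
      · rw [ha, hd]; linear_combination h1 + 36 * h1' - 12 * h2
      · rw [show n + 1 + 1 = n + 2 from rfl, ha, hd]
        linear_combination 6 * h1' - h2
  intro k
  have h1 := (key k).1
  have h2 := hm k
  nlinarith [h1, h2]
end
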